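/- Let G be a simple graph on [r] with no isolated vertex, and let α ∈ ℝ^r be a vertex of the polyhedron SP(G) = {x ∈ ℝ^r : x_i + x_j ≥ 1 for all edges {i,j} of G, x_i ≥ 0 for all i}. Then every coordinate α_i lies in {0, 1/2, 1}. -/

import Mathlib

/-- The polyhedron `SP(G) = {x ∈ ℝ^V : x i + x j ≥ 1 for all edges ij, x ≥ 0}`. -/
def SPgraph {V : Type*} (G : SimpleGraph V) : Set (V → ℝ) :=
  {x | (∀ i j, G.Adj i j → 1 ≤ x i + x j) ∧ ∀ i, 0 ≤ x i}

/-- if `G` is a graph on `[r]` with no isolated vertex and `α` is a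
vertex (extreme point) of the polyhedron `SP(G)`, then every coordinate of `α`
lies in `{0, 1/2, 1}`. -/
theorem vertex_SP_coords_mem
    {r : ℕ} (G : SimpleGraph (Fin r))
    (hiso : ∀ i, ∃ j, G.Adj i j)
    (α : Fin r → ℝ) (hα : α ∈ Set.extremePoints ℝ (SPgraph G)) :
    ∀ i, α i = 0 ∨ α i = 1/2 ∨ α i = 1 := by
  intro i
  by_contra hcon
  push_neg at hcon
  obtain ⟨h0, hhalf, h1⟩ := hcon
  obtain ⟨hmem, hext⟩ := hα
  obtain ⟨hedge, hnn⟩ := hmem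
  -- perturbation direction
  set χ : Fin r → ℝ := fun j =>
    if 0 < α j ∧ α j < 1/2 then -1
    else if 1/2 < α j ∧ α j < 1 then 1
    else if 1 < α j then -1 else 0 with hχdef
  have hclass : ∀ j, (χ j = -1 ∧ 0 < α j ∧ α j < 1/2) ∨ (χ j = 1 ∧ 1/2 < α j ∧ α j < 1)
      ∨ (χ j = -1 ∧ 1 < α j) ∨ (χ j = 0 ∧ (α j = 0 ∨ α j = 1/2 ∨ α j = 1)) := by
    intro j
    have hj0 : 0 ≤ α j := hnn j
    simp only [hχdef]
    split_ifs with a b c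
    · exact Or.inl ⟨rfl, a⟩
    · exact Or.inr (Or.inl ⟨rfl, b⟩)
    · exact Or.inr (Or.inr (Or.inl ⟨rfl, c⟩))
    · refine Or.inr (Or.inr (Or.inr ⟨rfl, ?_⟩))
      push_neg at a b c
      rcases eq_or_lt_of_le hj0 with h | h
      · exact Or.inl h.symm
      rcases eq_or_lt_of_le (a h) with h' | h'
      · exact Or.inr (Or.inl h'.symm)
      rcases eq_or_lt_of_le (b h') with h'' | h''
      · exact Or.inr (Or.inr h''.symm)
      · exact absurd h'' (not_lt.mpr c)
  have hχi : χ i ≠ 0 := by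
    rcases hclass i with ⟨e, _⟩ | ⟨e, _⟩ | ⟨e, _⟩ | ⟨e, h⟩
    · rw [e]; norm_num
    · rw [e]; norm_num
    · rw [e]; norm_num
    · rcases h with h | h | h
      · exact absurd h h0
      · exact absurd h hhalf
      · exact absurd h h1
  have hχbd : ∀ j, -1 ≤ χ j ∧ χ j ≤ 1 := by
    intro j
    rcases hclass j with ⟨e, _⟩ | ⟨e, _⟩ | ⟨e, _⟩ | ⟨e, _⟩ <;> rw [e] <;> norm_num
  have hχpos : ∀ j, χ j ≠ 0 → 0 < α j := by
    intro j hj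
    rcases hclass j with ⟨e, h, _⟩ | ⟨e, h, _⟩ | ⟨e, h⟩ | ⟨e, _⟩
    · exact h
    · linarith
    · linarith
    · exact absurd e hj
  -- on tight edges, χ sums to zero
  have hkey : ∀ j k, G.Adj j k → χ j + χ k ≠ 0 → 1 < α j + α k := by
    intro j k hjk hne
    rcases lt_or_eq_of_le (hedge j k hjk) with h | h
    · exact h
    exfalso
    apply hne
    have hj0 : 0 ≤ α j := hnn j
    have hk0 : 0 ≤ α k := hnn k
    rcases hclass j with ⟨ej, hj1, hj2⟩ | ⟨ej, hj1, hj2⟩ | ⟨ej, hj1⟩ | ⟨ej, hj⟩ <;>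
      rcases hclass k with ⟨ek, hk1, hk2⟩ | ⟨ek, hk1, hk2⟩ | ⟨ek, hk1⟩ | ⟨ek, hk⟩ <;>
      rw [ej, ek] <;>
      first
        | (norm_num; done)
        | (exfalso; linarith)
        | (exfalso; rcases hj with h' | h' | h' <;> linarith)
        | (exfalso; rcases hk with h' | h' | h' <;> linarith)
  -- choose ε
  have hne1 : (Finset.univ : Finset (Fin r)).Nonempty := ⟨i, Finset.mem_univ i⟩
  have hne2 : (Finset.univ : Finset (Fin r × Fin r)).Nonempty :=
    ⟨(i, i), Finset.mem_univ _⟩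
  set g : Fin r → ℝ := fun j => if 0 < α j then α j else 1 with hgdef
  set f : Fin r × Fin r → ℝ :=
    fun p => if 1 < α p.1 + α p.2 then (α p.1 + α p.2 - 1) / 2 else 1 with hfdef
  set ε : ℝ := min (Finset.univ.inf' hne1 g) (Finset.univ.inf' hne2 f) with hεdef
  have hε : 0 < ε := by
    rw [hεdef, lt_min_iff]
    constructor
    · rw [Finset.lt_inf'_iff]
      intro j _
      simp only [hgdef]
      split_ifs with h
      · exact h
      · norm_num
    · rw [Finset.lt_inf'_iff]
      intro p _
      simp only [hfdef]
      split_ifs with h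
      · linarith
      · norm_num
  have hεα : ∀ j, χ j ≠ 0 → ε ≤ α j := by
    intro j hj
    have h1' : ε ≤ g j := le_trans (min_le_left _ _) (Finset.inf'_le g (Finset.mem_univ j))
    simp only [hgdef] at h1'
    rw [if_pos (hχpos j hj)] at h1'
    exact h1'
  have hεslack : ∀ j k, G.Adj j k → χ j + χ k ≠ 0 → 2 * ε ≤ α j + α k - 1 := by
    intro j k hjk hne
    have h1' : ε ≤ f (j, k) :=
      le_trans (min_le_right _ _) (Finset.inf'_le f (Finset.mem_univ (j, k)))
    simp only [hfdef] at h1'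
    rw [if_pos (hkey j k hjk hne)] at h1'
    linarith
  -- the two perturbed points
  set y : Fin r → ℝ := fun j => α j + ε * χ j with hydef
  set z : Fin r → ℝ := fun j => α j - ε * χ j with hzdef
  have hmul_lb : ∀ j, -ε ≤ ε * χ j := by
    intro j
    nlinarith [(hχbd j).1, hε.le]
  have hmul_ub : ∀ j, ε * χ j ≤ ε := by
    intro j
    nlinarith [(hχbd j).2, hε.le]
  have hy : y ∈ SPgraph G := by
    constructor
    · intro j k hjk
      show 1 ≤ α j + ε * χ j + (α k + ε * χ k)
      by_cases hc : χ j + χ k = 0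
      · have : ε * χ j + ε * χ k = 0 := by rw [← mul_add, hc, mul_zero]
        linarith [hedge j k hjk]
      · have hs := hεslack j k hjk hc
        linarith [hmul_lb j, hmul_lb k]
    · intro j
      show 0 ≤ α j + ε * χ j
      by_cases hc : χ j = 0
      · rw [hc, mul_zero]; linarith [hnn j]
      · linarith [hεα j hc, hmul_lb j]
  have hz : z ∈ SPgraph G := by
    constructor
    · intro j k hjk
      show 1 ≤ α j - ε * χ j + (α k - ε * χ k)
      by_cases hc : χ j + χ k = 0
      · have : ε * χ j + ε * χ k = 0 := by rw [← mul_add, hc, mul_zero]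
        linarith [hedge j k hjk]
      · have hs := hεslack j k hjk hc
        linarith [hmul_ub j, hmul_ub k]
    · intro j
      show 0 ≤ α j - ε * χ j
      by_cases hc : χ j = 0
      · rw [hc, mul_zero]; linarith [hnn j]
      · linarith [hεα j hc, hmul_ub j]
  have hseg : α ∈ openSegment ℝ y z := by
    refine ⟨1/2, 1/2, by norm_num, by norm_num, by norm_num, ?_⟩
    funext j
    show (1/2 : ℝ) * (α j + ε * χ j) + (1/2 : ℝ) * (α j - ε * χ j) = α j
    ring
  have hy' := hext hy hz hseg
  have hyi := congrFun hy' i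
  have : ε * χ i ≠ 0 := mul_ne_zero hε.ne' hχi
  apply this
  have : α i + ε * χ i = α i := hyi
  linarith
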